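/- For every positive integer k and every ν > 0, (1/V_{1,k})·(2πν)^{−k/2}·∫_{B_k} exp(−‖x‖²/(2ν)) dx = (k/(2π^{k/2}))·∫₀^{1/(2ν)} t^{k/2−1} e^{−t} dt, where V_{1,k} = π^{k/2}/Γ(k/2+1) is the volume of the unit ball B_k ⊆ ℝ^k. Consequently, for fixed k this quantity is strictly decreasing in ν: if 0 < ν_R < ν_P then f_k(ν_R) > f_k(ν_P), where f_k(ν) denotes the left-hand side. -/

import Mathlib

open Real MeasureTheory


private lemma keyCOV (k : ℕ) (hk : 0 < k) {ν : ℝ} (hν : 0 < ν) :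
    (∫ t in (0:ℝ)..(1 / (2 * ν)), t ^ ((k : ℝ) / 2 - 1) * Real.exp (-t))
      = 2 * (2 * ν) ^ (-(k:ℝ)/2) *
        ∫ r in (0:ℝ)..1, r ^ (k - 1) * Real.exp (-r ^ 2 / (2 * ν)) := by
  have h2ν : (0:ℝ) < 2 * ν := by linarith
  have hb : (0:ℝ) ≤ 1 / (2 * ν) := by positivity
  have himg : (fun r : ℝ => r ^ 2 / (2 * ν)) '' Set.Ioo 0 1 = Set.Ioo 0 (1 / (2 * ν)) := by
    ext t
    constructor
    · rintro ⟨r, ⟨hr0, hr1⟩, rfl⟩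
      refine ⟨by positivity, ?_⟩
      rw [div_lt_div_iff_of_pos_right h2ν]
      nlinarith
    · rintro ⟨ht0, ht1⟩
      refine ⟨Real.sqrt (2 * ν * t), ⟨Real.sqrt_pos.mpr (by positivity), ?_⟩, ?_⟩
      · calc Real.sqrt (2 * ν * t) < Real.sqrt 1 := by
              apply Real.sqrt_lt_sqrt (by positivity)
              nlinarith [(lt_div_iff₀ h2ν).mp ht1]
            _ = 1 := Real.sqrt_one
      · show Real.sqrt (2 * ν * t) ^ 2 / (2 * ν) = t
        rw [Real.sq_sqrt (by positivity)]
        field_simp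
  have hderiv : ∀ r ∈ Set.Ioo (0:ℝ) 1,
      HasDerivWithinAt (fun r : ℝ => r ^ 2 / (2 * ν)) (r / ν) (Set.Ioo 0 1) r := by
    intro r hr
    have := ((hasDerivAt_pow 2 r).div_const (2 * ν)).hasDerivWithinAt (s := Set.Ioo (0:ℝ) 1)
    refine this.congr_deriv ?_
    field_simp
    ring
  have hinj : Set.InjOn (fun r : ℝ => r ^ 2 / (2 * ν)) (Set.Ioo 0 1) := by
    intro a ha b hb h
    have h2 : a ^ 2 = b ^ 2 := by
      field_simp at h; exact h
    have := Real.sqrt_sq ha.1.le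
    rw [← Real.sqrt_sq ha.1.le, h2, Real.sqrt_sq hb.1.le]
  rw [intervalIntegral.integral_of_le hb, MeasureTheory.integral_Ioc_eq_integral_Ioo,
    show Set.Ioo (0:ℝ) (1/(2*ν)) = (fun r : ℝ => r ^ 2 / (2 * ν)) '' Set.Ioo 0 1 from himg.symm,
    MeasureTheory.integral_image_eq_integral_abs_deriv_smul measurableSet_Ioo hderiv hinj,
    intervalIntegral.integral_of_le zero_le_one, MeasureTheory.integral_Ioc_eq_integral_Ioo,
    ← MeasureTheory.integral_const_mul]
  apply MeasureTheory.setIntegral_congr_fun measurableSet_Ioo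
  intro r hr
  have hr0 : (0:ℝ) < r := hr.1
  have hP : (0:ℝ) < (2*ν) ^ ((k:ℝ)/2) := Real.rpow_pos_of_pos h2ν _
  have hrk : (r:ℝ) ^ (k - 1) = r ^ ((k:ℝ) - 2) * r := by
    rw [← Real.rpow_natCast r (k-1), Nat.cast_sub hk, Nat.cast_one,
      show (k:ℝ) - 1 = ((k:ℝ) - 2) + 1 by ring, Real.rpow_add hr0, Real.rpow_one]
  have hpow : (r ^ 2 / (2 * ν)) ^ ((k:ℝ)/2 - 1)
      = r ^ ((k:ℝ) - 2) / ((2*ν) ^ ((k:ℝ)/2) / (2*ν)) := by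
    rw [Real.div_rpow (sq_nonneg r) h2ν.le, ← Real.rpow_natCast r 2,
      ← Real.rpow_mul hr0.le, show ((2:ℕ):ℝ) * ((k:ℝ)/2 - 1) = (k:ℝ) - 2 by push_cast; ring,
      Real.rpow_sub h2ν, Real.rpow_one]
  simp only [smul_eq_mul]
  rw [hpow, hrk, abs_of_pos (div_pos hr0 hν), show (-(k:ℝ)/2) = -((k:ℝ)/2) by ring, Real.rpow_neg h2ν.le, neg_div]
  have hν' : ν ≠ 0 := hν.ne'
  field_simp


private lemma ballInt (k : ℕ) (hk : 0 < k) {ν : ℝ} (hν : 0 < ν) :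
    (∫ x in Metric.closedBall (0 : EuclideanSpace ℝ (Fin k)) 1, Real.exp (-‖x‖ ^ 2 / (2 * ν)))
      = k * (Real.sqrt Real.pi ^ k / Real.Gamma ((k:ℝ)/2 + 1)) *
        ∫ r in (0:ℝ)..1, r ^ (k - 1) * Real.exp (-r ^ 2 / (2 * ν)) := by
  haveI : Nonempty (Fin k) := ⟨⟨0, hk⟩⟩
  haveI : Nontrivial (EuclideanSpace ℝ (Fin k)) := by
    refine ⟨0, EuclideanSpace.single ⟨0, hk⟩ 1, ?_⟩
    intro h
    have := congrArg (fun f => f ⟨0, hk⟩) h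
    simp [EuclideanSpace.single_apply] at this
  set f : ℝ → ℝ := Set.indicator (Set.Iic 1) (fun r => Real.exp (-r ^ 2 / (2 * ν))) with hf
  have h1 : (∫ x in Metric.closedBall (0 : EuclideanSpace ℝ (Fin k)) 1,
      Real.exp (-‖x‖ ^ 2 / (2 * ν))) = ∫ x : EuclideanSpace ℝ (Fin k), f ‖x‖ := by
    rw [← MeasureTheory.integral_indicator measurableSet_closedBall]
    congr 1
    ext x
    by_cases h : x ∈ Metric.closedBall (0 : EuclideanSpace ℝ (Fin k)) 1
    · rw [Set.indicator_of_mem h, hf,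
        Set.indicator_of_mem (Set.mem_Iic.mpr (mem_closedBall_zero_iff.mp h))]
    · rw [Set.indicator_of_notMem h, hf,
        Set.indicator_of_notMem (fun hc => h (mem_closedBall_zero_iff.mpr (Set.mem_Iic.mp hc)))]
  rw [h1, MeasureTheory.integral_fun_norm_addHaar volume f, finrank_euclideanSpace_fin]
  have h2 : (volume (Metric.ball (0 : EuclideanSpace ℝ (Fin k)) 1)).toReal
      = Real.sqrt Real.pi ^ k / Real.Gamma ((k:ℝ)/2 + 1) := by
    rw [EuclideanSpace.volume_ball]
    have hΓ : (0:ℝ) < Real.Gamma ((k:ℝ)/2 + 1) := Real.Gamma_pos_of_pos (by positivity)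
    simp [Fintype.card_fin, ENNReal.toReal_mul, ENNReal.toReal_ofReal,
      le_of_lt (div_pos (by positivity) hΓ)]
    positivity
  have h3 : (∫ y in Set.Ioi (0:ℝ), y ^ (k - 1) • f y)
      = ∫ r in (0:ℝ)..1, r ^ (k - 1) * Real.exp (-r ^ 2 / (2 * ν)) := by
    have : ∀ y ∈ Set.Ioi (0:ℝ), y ^ (k - 1) • f y
        = Set.indicator (Set.Iic (1:ℝ)) (fun y => y ^ (k - 1) * Real.exp (-y ^ 2 / (2 * ν))) y := by
      intro y _
      simp only [hf, Set.indicator_apply, smul_eq_mul]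
      by_cases h : y ∈ Set.Iic (1:ℝ) <;> simp [h]
    rw [MeasureTheory.setIntegral_congr_fun measurableSet_Ioi this,
      MeasureTheory.setIntegral_indicator measurableSet_Iic, Set.Ioi_inter_Iic,
      intervalIntegral.integral_of_le zero_le_one]
  rw [measureReal_def, h2, h3, nsmul_eq_mul, smul_eq_mul]
  ring

/-- `f_k(ν) := (1/V_{1,k})·(2πν)^{−k/2}·∫_{B_k} exp(−‖x‖²/(2ν)) dx`, the density at `0` of
`X + Z` for `X` uniform on the unit ball `B_k ⊆ ℝ^k` and `Z ~ N(0, ν I_k)` independent.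
Here `V_{1,k} = π^{k/2}/Γ(k/2+1)` is the volume of the unit ball. -/
noncomputable def densAtZero (k : ℕ) (ν : ℝ) : ℝ :=
  (1 / (Real.pi ^ ((k : ℝ) / 2) / Real.Gamma ((k : ℝ) / 2 + 1))) *
    (2 * Real.pi * ν) ^ (-(k : ℝ) / 2) *
    ∫ x in Metric.closedBall (0 : EuclideanSpace ℝ (Fin k)) 1,
      Real.exp (-‖x‖ ^ 2 / (2 * ν))

/-- `f_k(ν) = (k/(2π^{k/2}))·∫₀^{1/(2ν)} t^{k/2−1} e^{−t} dt`, and consequently `f_k` is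
strictly decreasing in `ν`: if `0 < ν_R < ν_P` then `f_k(ν_R) > f_k(ν_P)`. -/
theorem densAtZero_eq_and_strictAnti (k : ℕ) (hk : 0 < k) :
    (∀ ν : ℝ, 0 < ν →
      densAtZero k ν =
        ((k : ℝ) / (2 * Real.pi ^ ((k : ℝ) / 2))) *
          ∫ t in (0:ℝ)..(1 / (2 * ν)), t ^ ((k : ℝ) / 2 - 1) * Real.exp (-t)) ∧
    (∀ νR νP : ℝ, 0 < νR → νR < νP → densAtZero k νR > densAtZero k νP) := by
  have key : ∀ ν : ℝ, 0 < ν →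
      densAtZero k ν =
        ((k : ℝ) / (2 * Real.pi ^ ((k : ℝ) / 2))) *
          ∫ t in (0:ℝ)..(1 / (2 * ν)), t ^ ((k : ℝ) / 2 - 1) * Real.exp (-t) := by
    intro ν hν
    rw [keyCOV k hk hν, densAtZero, ballInt k hk hν]
    have hG : (0:ℝ) < Real.Gamma ((k:ℝ)/2 + 1) := Real.Gamma_pos_of_pos (by positivity)
    have hπ : (0:ℝ) < Real.pi ^ ((k:ℝ)/2) := Real.rpow_pos_of_pos Real.pi_pos _
    have hs : Real.sqrt Real.pi ^ k = Real.pi ^ ((k:ℝ)/2) := by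
      rw [Real.sqrt_eq_rpow, ← Real.rpow_natCast (Real.pi ^ ((1:ℝ)/2)) k,
        ← Real.rpow_mul Real.pi_pos.le]
      congr 1
      push_cast
      ring
    have hmul : (2*Real.pi*ν) ^ (-(k:ℝ)/2) = Real.pi ^ (-(k:ℝ)/2) * (2*ν) ^ (-(k:ℝ)/2) := by
      rw [show (2*Real.pi*ν) = Real.pi*(2*ν) by ring,
        Real.mul_rpow Real.pi_pos.le (by positivity)]
    have hπinv : Real.pi ^ (-(k:ℝ)/2) = (Real.pi ^ ((k:ℝ)/2))⁻¹ := by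
      rw [show -(k:ℝ)/2 = -((k:ℝ)/2) by ring, Real.rpow_neg Real.pi_pos.le]
    rw [hs, hmul, hπinv]
    field_simp
  refine ⟨key, ?_⟩
  intro νR νP hR hRP
  have hP : 0 < νP := hR.trans hRP
  rw [gt_iff_lt, key νR hR, key νP hP]
  have hC : 0 < (k:ℝ) / (2 * Real.pi ^ ((k:ℝ)/2)) := by
    apply div_pos
    · exact_mod_cast hk
    · positivity
  refine mul_lt_mul_of_pos_left ?_ hC
  set g : ℝ → ℝ := fun t => t ^ ((k:ℝ)/2 - 1) * Real.exp (-t) with hg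
  have hbP : (0:ℝ) < 1 / (2 * νP) := by positivity
  have hbb : 1 / (2 * νP) < 1 / (2 * νR) :=
    one_div_lt_one_div_of_lt (by positivity) (by linarith)
  have hkr : (-1:ℝ) < (k:ℝ)/2 - 1 := by
    have : (0:ℝ) < k := by exact_mod_cast hk
    linarith
  have I0P : IntervalIntegrable g volume 0 (1 / (2 * νP)) :=
    (intervalIntegral.intervalIntegrable_rpow' hkr).mul_continuousOn
      (Continuous.continuousOn (by continuity))
  have IPB : IntervalIntegrable g volume (1 / (2 * νP)) (1 / (2 * νR)) := by
    apply ContinuousOn.intervalIntegrable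
    apply ContinuousOn.mul
    · intro t ht
      have ht0 : 0 < t := by
        have := ht.1
        rw [min_eq_left hbb.le] at this
        linarith
      exact (Real.continuousAt_rpow_const t _ (Or.inl ht0.ne')).continuousWithinAt
    · exact Continuous.continuousOn (by continuity)
  have hsplit : (∫ t in (0:ℝ)..(1 / (2 * νR)), g t)
      = (∫ t in (0:ℝ)..(1 / (2 * νP)), g t) + ∫ t in (1 / (2 * νP))..(1 / (2 * νR)), g t :=
    (intervalIntegral.integral_add_adjacent_intervals I0P IPB).symm
  have hpos : 0 < ∫ t in (1 / (2 * νP))..(1 / (2 * νR)), g t := by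
    apply intervalIntegral.intervalIntegral_pos_of_pos_on IPB _ hbb
    intro t ht
    have ht0 : 0 < t := hbP.trans ht.1
    exact mul_pos (Real.rpow_pos_of_pos ht0 _) (Real.exp_pos _)
  rw [hsplit]
  linarith
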